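/- A directed graph code with generator matrix C = Γ + ωI is self-dual with respect to the Hermitian trace inner product if and only if Γ is symmetric (i.e., the graph is undirected). -/

import Mathlib

abbrev F4 := GaloisField 2 2
noncomputable instance : Fintype F4 := Fintype.ofFinite F4
noncomputable instance : DecidableEq F4 := Classical.decEq F4

/-- The Hermitian trace inner product. -/
noncomputable def trip {ι : Type} [Fintype ι] (u v : ι → F4) : F4 :=
  ∑ i, (u i * (v i) ^ 2 + (u i) ^ 2 * v i)

lemma F4char2 : (2 : F4) = 0 := by
  haveI : CharP F4 2 := inferInstance
  exact CharTwo.two_eq_zero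

lemma F4card : Fintype.card F4 = 4 := by
  rw [← Nat.card_eq_fintype_card]
  exact GaloisField.card 2 2 (by norm_num)

lemma F4pow4 (x : F4) : x ^ 4 = x := by
  have := FiniteField.pow_card x
  rwa [F4card] at this

lemma F4trace (x : F4) : x + x ^ 2 = 0 ∨ x + x ^ 2 = 1 := by
  have hy : (x + x ^ 2) ^ 2 = x + x ^ 2 := by
    linear_combination F4pow4 x + x ^ 3 * F4char2
  have h0 : (x + x ^ 2) * ((x + x ^ 2) - 1) = 0 := by linear_combination hy
  rcases mul_eq_zero.mp h0 with h | h
  · exact Or.inl h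
  · exact Or.inr (sub_eq_zero.mp h)

theorem selfdual_iff_symmetric {n : ℕ} (Γ : Matrix (Fin n) (Fin n) F4)
    (hbin : ∀ i j, Γ i j = 0 ∨ Γ i j = 1) (hdiag : ∀ i, Γ i i = 0)
    (ω : F4) (hω : ω ^ 2 = ω + 1) (C : Matrix (Fin n) (Fin n) F4)
    (hC : C = Γ + ω • 1) :
    ({x | ∃ a : Fin n → F4, (∀ i, a i = 0 ∨ a i = 1) ∧
        x = Matrix.vecMul a C} =
      {u : Fin n → F4 |
        ∀ c ∈ {x | ∃ a : Fin n → F4, (∀ i, a i = 0 ∨ a i = 1) ∧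
          x = Matrix.vecMul a C}, trip u c = 0}) ↔ Γ.transpose = Γ := by
  haveI : CharP F4 2 := inferInstance
  subst hC
  set M : Matrix (Fin n) (Fin n) F4 := Γ + ω • 1 with hMdef
  have h2 : (2 : F4) = 0 := F4char2
  have hsq : ∀ i j, (Γ i j) ^ 2 = Γ i j := fun i j => by
    rcases hbin i j with h | h <;> simp [h]
  have hMval : ∀ i k, M i k = Γ i k + ω * (if i = k then 1 else 0) := by
    intro i k
    simp [hMdef, Matrix.add_apply, Matrix.smul_apply, Matrix.one_apply]
  have hvm : ∀ (a : Fin n → F4) (k : Fin n),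
      Matrix.vecMul a M k = ∑ i, a i * M i k := by
    intro a k; simp [Matrix.vecMul, dotProduct]
  have hbin_single : ∀ j : Fin n, ∀ i, (Pi.single (M := fun _ => F4) j 1) i = 0 ∨
      (Pi.single (M := fun _ => F4) j 1) i = 1 := by
    intro j i
    rcases eq_or_ne i j with h | h
    · right; rw [h, Pi.single_eq_same]
    · left; rw [Pi.single_eq_of_ne h]
  have hsingle : ∀ j k : Fin n, Matrix.vecMul (Pi.single (M := fun _ => F4) j 1) M k = M j k := by
    intro j k
    rw [hvm]
    simp [Pi.single_apply, ite_mul, Finset.sum_ite_eq']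
  -- key per-coordinate identity
  have keyk : ∀ i j k : Fin n,
      M i k * (M j k) ^ 2 + (M i k) ^ 2 * M j k
        = Γ i k * (if j = k then 1 else 0) + Γ j k * (if i = k then 1 else 0) := by
    intro i j k
    rw [hMval i k, hMval j k]
    by_cases hik : i = k <;> by_cases hjk : j = k
    · rw [if_pos hik, if_pos hjk]
      linear_combination (ω + Γ i k) * hsq j k + (ω + Γ j k) * hsq i k +
        (2 + 2*ω + 3*Γ j k + 3*Γ i k) * hω +
        (1 + 2*ω + Γ j k + 2*Γ j k*ω + Γ i k + 2*Γ i k*ω + Γ i k*Γ j k +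
          2*Γ i k*Γ j k*ω) * h2
    · rw [if_pos hik, if_neg hjk]
      linear_combination (Γ i k + ω) * hsq j k + Γ j k * hsq i k + Γ j k * hω +
        (Γ j k*ω + Γ i k*Γ j k + Γ i k*Γ j k*ω) * h2
    · rw [if_neg hik, if_pos hjk]
      linear_combination Γ i k * hsq j k + (ω + Γ j k) * hsq i k + Γ i k * hω +
        (Γ i k*ω + Γ i k*Γ j k + Γ i k*Γ j k*ω) * h2
    · rw [if_neg hik, if_neg hjk]
      linear_combination Γ i k * hsq j k + Γ j k * hsq i k + (Γ i k * Γ j k) * h2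
  -- the key bilinear computation
  have tripCC : ∀ a b : Fin n → F4, (∀ i, a i = 0 ∨ a i = 1) →
      (∀ i, b i = 0 ∨ b i = 1) →
      trip (Matrix.vecMul a M) (Matrix.vecMul b M)
        = ∑ i, ∑ j, a i * b j * (Γ i j + Γ j i) := by
    intro a b ha hb
    have hexp : ∀ (c : Fin n → F4), (∀ i, c i = 0 ∨ c i = 1) → ∀ k,
        (Matrix.vecMul c M k) ^ 2 = ∑ i, c i * (M i k) ^ 2 := by
      intro c hc k
      rw [hvm, CharTwo.sum_sq]
      refine Finset.sum_congr rfl fun i _ => ?_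
      rw [mul_pow]
      rcases hc i with h | h <;> simp [h]
    have step1 : trip (Matrix.vecMul a M) (Matrix.vecMul b M)
        = ∑ k, ∑ i, ∑ j,
            a i * b j * (M i k * (M j k) ^ 2 + (M i k) ^ 2 * M j k) := by
      unfold trip
      refine Finset.sum_congr rfl fun k _ => ?_
      rw [hexp a ha k, hexp b hb k, hvm a k, hvm b k,
        Finset.sum_mul_sum, Finset.sum_mul_sum, ← Finset.sum_add_distrib]
      refine Finset.sum_congr rfl fun i _ => ?_
      rw [← Finset.sum_add_distrib]
      refine Finset.sum_congr rfl fun j _ => ?_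
      ring
    rw [step1, Finset.sum_comm]
    refine Finset.sum_congr rfl fun i _ => ?_
    rw [Finset.sum_comm]
    refine Finset.sum_congr rfl fun j _ => ?_
    rw [← Finset.mul_sum]
    congr 1
    calc ∑ k, (M i k * (M j k) ^ 2 + (M i k) ^ 2 * M j k)
        = ∑ k, (Γ i k * (if j = k then 1 else 0)
            + Γ j k * (if i = k then 1 else 0)) := by
          exact Finset.sum_congr rfl fun k _ => keyk i j k
      _ = Γ i j + Γ j i := by
          rw [Finset.sum_add_distrib]
          simp [mul_ite, Finset.sum_ite_eq]
  constructor
  · intro h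
    ext i j
    rw [Matrix.transpose_apply]
    have hmem : Matrix.vecMul (Pi.single (M := fun _ => F4) i 1) M ∈
        {x | ∃ a : Fin n → F4, (∀ i, a i = 0 ∨ a i = 1) ∧ x = Matrix.vecMul a M} :=
      ⟨Pi.single i 1, hbin_single i, rfl⟩
    rw [h] at hmem
    have h0 := hmem _ ⟨Pi.single j 1, hbin_single j, rfl⟩
    rw [tripCC _ _ (hbin_single i) (hbin_single j)] at h0
    have h0' : Γ i j + Γ j i = 0 := by
      rw [← h0]
      symm
      simp [Pi.single_apply, ite_mul, Finset.sum_ite_eq']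
    linear_combination h0' - Γ i j * h2
  · intro hsym
    have hsym' : ∀ i j, Γ j i = Γ i j := by
      intro i j
      conv_rhs => rw [← hsym]
      rw [Matrix.transpose_apply]
    ext u
    constructor
    · rintro ⟨a, ha, rfl⟩ c ⟨b, hb, rfl⟩
      rw [tripCC a b ha hb]
      refine Finset.sum_eq_zero fun i _ => Finset.sum_eq_zero fun j _ => ?_
      rw [hsym' i j, CharTwo.add_self_eq_zero, mul_zero]
    · intro hu
      refine ⟨fun i => u i + (u i) ^ 2, fun i => F4trace (u i), ?_⟩
      funext j
      have h0 := hu _ ⟨Pi.single j 1, hbin_single j, rfl⟩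
      unfold trip at h0
      have hterm : ∀ i, u i * (Matrix.vecMul (Pi.single (M := fun _ => F4) j 1) M i) ^ 2
            + (u i) ^ 2 * Matrix.vecMul (Pi.single (M := fun _ => F4) j 1) M i
          = (u i + (u i) ^ 2) * Γ j i
            + (if i = j then u j + ω * (u j + (u j) ^ 2) else 0) := by
        intro i
        rw [hsingle j i, hMval j i]
        by_cases hij : i = j
        · subst hij
          rw [if_pos rfl, if_pos rfl, hdiag i]
          linear_combination (u i) * hω
        · rw [if_neg hij, if_neg (fun hh => hij hh.symm)]
          linear_combination u i * hsq j i
      rw [Finset.sum_congr rfl fun i _ => hterm i, Finset.sum_add_distrib,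
        Finset.sum_ite_eq' Finset.univ j, if_pos (Finset.mem_univ j)] at h0
      have key : u j = (∑ i, (u i + (u i) ^ 2) * Γ j i)
          + ω * (u j + (u j) ^ 2) := by
        have h1 : u j + ((∑ i, (u i + (u i) ^ 2) * Γ j i)
            + ω * (u j + (u j) ^ 2)) = 0 := by linear_combination h0
        have h3 := eq_neg_of_add_eq_zero_left h1
        rwa [CharTwo.neg_eq] at h3
      rw [key, hvm]
      have : ∀ i, (u i + (u i) ^ 2) * M i j
          = (u i + (u i) ^ 2) * Γ j i
            + (if i = j then ω * (u j + (u j) ^ 2) else 0) := by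
        intro i
        rw [hMval i j, hsym' i j]
        by_cases hij : i = j
        · subst hij; simp [mul_add]; ring
        · simp [hij]
      rw [Finset.sum_congr rfl fun i _ => this i, Finset.sum_add_distrib,
        Finset.sum_ite_eq' Finset.univ j, if_pos (Finset.mem_univ j)]
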